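/- Let F_{n,p} be the n×n matrix with F(i,j) = -1 if i = j+1, F(i,j) = 1 if j - i ≥ p-1, else 0, and write its characteristic polynomial as sum over k of (-1)^(n-k) * a_{n-k} * x^k. Then a_{n-k} equals the number of compositions of n + kp - 2k with exactly k parts equal to p-1 and all other parts ≥ p. -/

import Mathlib

/-- The `n × n` Hessenberg matrix `F_{n,p}` with entries `-1` when `i = j + 1`,
`1` when `j - i ≥ p - 1`, and `0` otherwise. -/
def F (n p : ℕ) : Matrix (Fin n) (Fin n) ℤ := fun i j =>
  if (i : ℕ) = (j : ℕ) + 1 then -1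
  else if (p : ℤ) - 1 ≤ (j : ℤ) - (i : ℤ) then 1
  else 0

open Finset Polynomial Matrix

/-- Value-level entry function of `F`. -/
def ent (p i j : ℕ) : ℤ :=
  if i = j + 1 then -1 else if (p : ℤ) - 1 ≤ (j : ℤ) - (i : ℤ) then 1 else 0

lemma cm_ent (n p : ℕ) (i j : Fin n) :
    charmatrix (F n p) i j
      = (if (i : ℕ) = (j : ℕ) then X else 0) - C (ent p (i : ℕ) (j : ℕ)) := by
  rcases eq_or_ne i j with rfl | h
  · rw [charmatrix_apply_eq, if_pos rfl]; rfl
  · rw [charmatrix_apply_ne _ _ _ h, if_neg (fun hv => h (Fin.ext hv)), zero_sub]; rfl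

lemma cm_submatrix_castSucc (p n : ℕ) :
    (charmatrix (F (n+1) p)).submatrix Fin.castSucc Fin.castSucc = charmatrix (F n p) := by
  refine Matrix.ext fun a b => ?_
  rw [Matrix.submatrix_apply, cm_ent, cm_ent]
  simp

lemma minor_det (p n : ℕ) (hp : 0 < p) (i : Fin (n+1)) (hi : (i : ℕ) < n) :
    ((charmatrix (F (n+1) p)).submatrix i.succAbove Fin.castSucc).det
      = (F (i : ℕ) p).charpoly := by
  set m := (i : ℕ) with hm
  have hval : ∀ j : Fin n, ((i.succAbove j) : ℕ) = if (j : ℕ) < m then (j : ℕ) else (j : ℕ) + 1 := by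
    intro j
    rcases lt_or_ge ((j : ℕ)) m with h | h
    · rw [Fin.succAbove_of_castSucc_lt _ _ (by rw [Fin.lt_def]; simpa using h), if_pos h]
      simp
    · rw [Fin.succAbove_of_le_castSucc _ _ (by rw [Fin.le_def]; simpa using h), if_neg (by omega)]
      simp
  have hc : m + (n - m) = n := by omega
  set e : Fin m ⊕ Fin (n - m) ≃ Fin n := finSumFinEquiv.trans (finCongr hc) with he_def
  have he1 : ∀ a : Fin m, ((e (Sum.inl a) : Fin n) : ℕ) = (a : ℕ) := by
    intro a
    rw [he_def, Equiv.trans_apply, finSumFinEquiv_apply_left, finCongr_apply, Fin.coe_cast,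
      Fin.coe_castAdd]
  have he2 : ∀ b : Fin (n - m), ((e (Sum.inr b) : Fin n) : ℕ) = m + (b : ℕ) := by
    intro b
    rw [he_def, Equiv.trans_apply, finSumFinEquiv_apply_right, finCongr_apply, Fin.coe_cast,
      Fin.coe_natAdd]
  have hrow : ∀ b : Fin (n - m), ((i.succAbove (e (Sum.inr b))) : ℕ) = m + (b : ℕ) + 1 := by
    intro b
    rw [hval, he2, if_neg (by omega)]
  have hrow1 : ∀ a : Fin m, ((i.succAbove (e (Sum.inl a))) : ℕ) = (a : ℕ) := by
    intro a
    rw [hval, he1, if_pos a.isLt]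
  rw [← Matrix.det_submatrix_equiv_self e]
  have hblock : ((charmatrix (F (n+1) p)).submatrix i.succAbove Fin.castSucc).submatrix e e
      = Matrix.fromBlocks (charmatrix (F m p))
          (Matrix.of fun a b =>
            (charmatrix (F (n+1) p)).submatrix i.succAbove Fin.castSucc (e (Sum.inl a)) (e (Sum.inr b)))
          0
          (Matrix.of fun a b =>
            (charmatrix (F (n+1) p)).submatrix i.succAbove Fin.castSucc (e (Sum.inr a)) (e (Sum.inr b))) := by
    refine Matrix.ext fun a b => ?_
    rcases a with a | a <;> rcases b with b | b
    · rw [Matrix.submatrix_apply, Matrix.fromBlocks_apply₁₁, Matrix.submatrix_apply,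
        cm_ent, cm_ent, hrow1]
      have h2 : ((Fin.castSucc (e (Sum.inl b))) : ℕ) = (b : ℕ) := by
        rw [Fin.coe_castSucc, he1]
      rw [h2]
    · rfl
    · rw [Matrix.submatrix_apply, Matrix.fromBlocks_apply₂₁, Matrix.submatrix_apply, cm_ent, hrow]
      have h2 : ((Fin.castSucc (e (Sum.inl b))) : ℕ) = (b : ℕ) := by
        rw [Fin.coe_castSucc, he1]
      rw [h2]
      have hb : (b : ℕ) < m := b.isLt
      rw [if_neg (by omega), ent, if_neg (by omega), if_neg (by push_cast; omega)]
      simp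
    · rfl
  rw [hblock, Matrix.det_fromBlocks_zero₂₁]
  have hD : (Matrix.of fun a b =>
      (charmatrix (F (n+1) p)).submatrix i.succAbove Fin.castSucc (e (Sum.inr a)) (e (Sum.inr b))).det
        = 1 := by
    have htri : Matrix.BlockTriangular (Matrix.of fun a b =>
        (charmatrix (F (n+1) p)).submatrix i.succAbove Fin.castSucc (e (Sum.inr a)) (e (Sum.inr b))) id := by
      intro a b hab
      have hab' : (b : ℕ) < (a : ℕ) := hab
      show (charmatrix (F (n+1) p)).submatrix i.succAbove Fin.castSucc (e (Sum.inr a)) (e (Sum.inr b)) = 0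
      rw [Matrix.submatrix_apply, cm_ent, hrow]
      have h2 : ((Fin.castSucc (e (Sum.inr b))) : ℕ) = m + (b : ℕ) := by
        rw [Fin.coe_castSucc, he2]
      rw [h2, if_neg (by omega), ent, if_neg (by omega), if_neg (by push_cast; omega)]
      simp
    rw [Matrix.det_of_upperTriangular htri]
    apply Finset.prod_eq_one
    intro a _
    show (charmatrix (F (n+1) p)).submatrix i.succAbove Fin.castSucc (e (Sum.inr a)) (e (Sum.inr a)) = 1
    rw [Matrix.submatrix_apply, cm_ent, hrow]
    have h2 : ((Fin.castSucc (e (Sum.inr a))) : ℕ) = m + (a : ℕ) := by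
      rw [Fin.coe_castSucc, he2]
    rw [h2, if_neg (by omega), ent, if_pos (by omega)]
    simp
  rw [hD, mul_one, Matrix.charpoly]

lemma charpoly_F_zero (p : ℕ) : (F 0 p).charpoly = 1 := by
  rw [Matrix.charpoly]
  exact Matrix.det_isEmpty

lemma charpoly_rec (p : ℕ) (hp : 0 < p) (n : ℕ) :
    (F (n+1) p).charpoly = X * (F n p).charpoly
      + ∑ j ∈ Finset.range (n + 2 - p), (-1 : ℤ[X])^(n+1+j) * (F j p).charpoly := by
  rw [Matrix.charpoly, Matrix.det_succ_column _ (Fin.last n), Fin.sum_univ_castSucc]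
  -- the last (diagonal) term
  have hlast : ((-1 : ℤ[X])) ^ ((Fin.last n : ℕ) + (Fin.last n : ℕ))
      * charmatrix (F (n+1) p) (Fin.last n) (Fin.last n)
      * ((charmatrix (F (n+1) p)).submatrix (Fin.last n).succAbove (Fin.last n).succAbove).det
      = (X - C (ent p n n)) * (F n p).charpoly := by
    rw [Fin.succAbove_last, cm_submatrix_castSucc, cm_ent]
    simp only [Fin.val_last, eq_self_iff_true, if_true]
    rw [show n + n = 2 * n by ring, pow_mul,
      show ((-1 : ℤ[X])^2) = 1 from by norm_num, one_pow, one_mul, Matrix.charpoly]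
  -- the off-diagonal terms
  have hoff : ∀ v : Fin n,
      ((-1 : ℤ[X])) ^ (((Fin.castSucc v) : ℕ) + (Fin.last n : ℕ))
        * charmatrix (F (n+1) p) (Fin.castSucc v) (Fin.last n)
        * ((charmatrix (F (n+1) p)).submatrix (Fin.castSucc v).succAbove (Fin.last n).succAbove).det
      = if (v : ℕ) + p ≤ n + 1 then (-1 : ℤ[X])^(n+1+(v : ℕ)) * (F (v : ℕ) p).charpoly else 0 := by
    intro v
    rw [Fin.succAbove_last, minor_det p n hp _ (by simp [v.isLt]), cm_ent]
    simp only [Fin.coe_castSucc, Fin.val_last]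
    rw [if_neg (by omega), ent, if_neg (by omega)]
    by_cases hcond : (v : ℕ) + p ≤ n + 1
    · rw [if_pos (by push_cast; omega), if_pos hcond]
      rw [zero_sub, Polynomial.C_1,
        show (n + 1 + (v : ℕ)) = ((v : ℕ) + n) + 1 by ring, pow_succ]
    · rw [if_neg (by push_cast; omega), if_neg hcond]
      simp
  rw [hlast, Finset.sum_congr rfl (fun v _ => hoff v)]
  rw [Fin.sum_univ_eq_sum_range
    (fun v => if v + p ≤ n + 1 then (-1 : ℤ[X])^(n+1+v) * (F v p).charpoly else 0)]
  rcases eq_or_lt_of_le (show 1 ≤ p from hp) with hp1 | hp2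
  · -- p = 1
    have hp1' : p = 1 := hp1.symm
    subst hp1'
    have hent : ent 1 n n = 1 := by
      rw [ent, if_neg (by omega), if_pos (by push_cast; omega)]
    rw [hent, show n + 2 - 1 = n + 1 from rfl, Finset.sum_range_succ]
    have : ∀ v ∈ Finset.range n, (if v + 1 ≤ n + 1 then (-1 : ℤ[X])^(n+1+v) * (F v 1).charpoly else 0)
        = (-1 : ℤ[X])^(n+1+v) * (F v 1).charpoly := by
      intro v hv
      simp only [Finset.mem_range] at hv
      rw [if_pos (by omega)]
    rw [Finset.sum_congr rfl this,
      show (n + 1 + n) = 2 * n + 1 by ring, pow_succ, pow_mul,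
      show ((-1 : ℤ[X])^2) = 1 from by norm_num, one_pow, one_mul, Polynomial.C_1]
    ring
  · -- p ≥ 2
    have hent : ent p n n = 0 := by
      rw [ent, if_neg (by omega), if_neg (by push_cast; omega)]
    have hsum : (∑ v ∈ Finset.range n,
        if v + p ≤ n + 1 then (-1 : ℤ[X])^(n+1+v) * (F v p).charpoly else 0)
        = ∑ j ∈ Finset.range (n + 2 - p), (-1 : ℤ[X])^(n+1+j) * (F j p).charpoly := by
      rw [← Finset.sum_subset (Finset.range_subset_range.2 (show n + 2 - p ≤ n by omega))]
      · refine Finset.sum_congr rfl fun v hv => ?_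
        rw [if_pos (by simp only [Finset.mem_range] at hv; omega)]
      · intro v hv hnv
        simp only [Finset.mem_range] at hv hnv
        rw [if_neg (by omega)]
    rw [hent, map_zero, sub_zero, hsum]
    ring




/-- Fuelled Finset of lists with sum `s`, exactly `k` parts equal to `p-1`,
all other parts `≥ p`. -/
def LSf (p : ℕ) : ℕ → ℕ → ℕ → Finset (List ℕ)
  | 0, _, _ => ∅
  | (f+1), s, k =>
      (if s = 0 ∧ k = 0 then {([] : List ℕ)} else ∅)
      ∪ (if 1 ≤ k ∧ p - 1 ≤ s then (LSf p f (s - (p-1)) (k-1)).image (List.cons (p-1)) else ∅)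
      ∪ (Finset.Icc p s).biUnion (fun m => (LSf p f (s - m) k).image (List.cons m))

lemma mem_LSf (p : ℕ) (hp : 0 < p) :
    ∀ f s k l, s + k < f →
      (l ∈ LSf p f s k ↔
        (l.sum = s ∧ l.count (p-1) = k ∧ ∀ x ∈ l, x = p-1 ∨ p ≤ x)) := by
  intro f
  induction f with
  | zero => intro s k l h; omega
  | succ f ih =>
    intro s k l h
    rw [LSf]
    cases l with
    | nil =>
      constructor
      · intro hmem
        rcases Finset.mem_union.1 hmem with hmem | hmem
        · rcases Finset.mem_union.1 hmem with h1 | h2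
          · by_cases hc : s = 0 ∧ k = 0
            · rw [if_pos hc] at h1; simpa [hc.1, hc.2] using trivial
            · rw [if_neg hc] at h1; exact absurd h1 (Finset.notMem_empty _)
          · by_cases hc : 1 ≤ k ∧ p - 1 ≤ s
            · rw [if_pos hc] at h2
              obtain ⟨t, -, habs⟩ := Finset.mem_image.1 h2
              exact absurd habs (by simp)
            · rw [if_neg hc] at h2; exact absurd h2 (Finset.notMem_empty _)
        · obtain ⟨m, -, hm⟩ := Finset.mem_biUnion.1 hmem
          obtain ⟨t, -, habs⟩ := Finset.mem_image.1 hm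
          exact absurd habs (by simp)
      · rintro ⟨hs, hk, -⟩
        simp only [List.sum_nil] at hs
        simp only [List.count_nil] at hk
        apply Finset.mem_union_left
        apply Finset.mem_union_left
        rw [if_pos ⟨hs.symm, hk.symm⟩]
        exact Finset.mem_singleton_self _
    | cons x t =>
      constructor
      · intro hmem
        rcases Finset.mem_union.1 hmem with hmem | hmem
        · rcases Finset.mem_union.1 hmem with h1 | h2
          · by_cases hc : s = 0 ∧ k = 0
            · rw [if_pos hc] at h1; exact absurd (Finset.mem_singleton.1 h1) (by simp)
            · rw [if_neg hc] at h1; exact absurd h1 (Finset.notMem_empty _)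
          · by_cases hc : 1 ≤ k ∧ p - 1 ≤ s
            swap
            · rw [if_neg hc] at h2; exact absurd h2 (Finset.notMem_empty _)
            rw [if_pos hc] at h2
            obtain ⟨t', ht', heq⟩ := Finset.mem_image.1 h2
            injection heq with hx ht
            subst hx; subst ht
            obtain ⟨hsum, hcnt, hall⟩ := (ih (s - (p-1)) (k-1) t' (by omega)).1 ht'
            refine ⟨?_, ?_, ?_⟩
            · simp only [List.sum_cons, hsum]; omega
            · rw [List.count_cons_self, hcnt]; omega
            · intro y hy
              rcases List.mem_cons.1 hy with rfl | hy
              · left; rfl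
              · exact hall y hy
        · obtain ⟨m, hmIcc, hm⟩ := Finset.mem_biUnion.1 hmem
          obtain ⟨hpm, hms⟩ := Finset.mem_Icc.1 hmIcc
          obtain ⟨t', ht', heq⟩ := Finset.mem_image.1 hm
          injection heq with hx ht
          subst hx; subst ht
          obtain ⟨hsum, hcnt, hall⟩ := (ih (s - m) k t' (by omega)).1 ht'
          refine ⟨?_, ?_, ?_⟩
          · simp only [List.sum_cons, hsum]; omega
          · rw [List.count_cons_of_ne (by omega), hcnt]
          · intro y hy
            rcases List.mem_cons.1 hy with rfl | hy
            · right; exact hpm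
            · exact hall y hy
      · rintro ⟨hsum, hcnt, hall⟩
        simp only [List.sum_cons] at hsum
        rcases hall x List.mem_cons_self with hx | hx
        · -- head is p - 1
          subst hx
          rw [List.count_cons_self] at hcnt
          have hk : 1 ≤ k := by omega
          apply Finset.mem_union_left
          apply Finset.mem_union_right
          rw [if_pos ⟨hk, by omega⟩]
          apply Finset.mem_image.2
          refine ⟨t, ?_, rfl⟩
          refine (ih (s - (p-1)) (k-1) t (by omega)).2 ⟨by omega, by omega, ?_⟩
          intro y hy; exact hall y (List.mem_cons_of_mem _ hy)
        · -- head ≥ p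
          apply Finset.mem_union_right
          apply Finset.mem_biUnion.2
          refine ⟨x, Finset.mem_Icc.2 ⟨hx, by omega⟩, ?_⟩
          apply Finset.mem_image.2
          refine ⟨t, ?_, rfl⟩
          rw [List.count_cons_of_ne (by omega)] at hcnt
          refine (ih (s - x) k t (by omega)).2 ⟨by omega, hcnt, ?_⟩
          intro y hy; exact hall y (List.mem_cons_of_mem _ hy)

/-- The Finset of lists with sum `s`, exactly `k` parts equal `p-1`, other parts `≥ p`. -/
def LS (p s k : ℕ) : Finset (List ℕ) := LSf p (s + k + 1) s k

lemma mem_LS (p : ℕ) (hp : 0 < p) (s k : ℕ) (l : List ℕ) :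
    l ∈ LS p s k ↔ (l.sum = s ∧ l.count (p-1) = k ∧ ∀ x ∈ l, x = p-1 ∨ p ≤ x) :=
  mem_LSf p hp _ s k l (by omega)

lemma LSf_eq_LS (p : ℕ) (hp : 0 < p) (f s k : ℕ) (h : s + k < f) :
    LSf p f s k = LS p s k :=
  Finset.ext fun l => by rw [mem_LSf p hp f s k l h, mem_LS p hp]

private lemma cons_inj (m : ℕ) : Function.Injective (List.cons m) := by
  intro a b h; injection h

lemma LS_card_rec (p : ℕ) (hp : 0 < p) (s k : ℕ) :
    (LS p s k).card = (if s = 0 ∧ k = 0 then 1 else 0)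
      + (if 1 ≤ k ∧ p - 1 ≤ s then (LS p (s - (p-1)) (k-1)).card else 0)
      + ∑ m ∈ Finset.Icc p s, (LS p (s - m) k).card := by
  have hunfold : LS p s k =
      (if s = 0 ∧ k = 0 then {([] : List ℕ)} else ∅)
      ∪ (if 1 ≤ k ∧ p - 1 ≤ s then (LSf p (s+k) (s - (p-1)) (k-1)).image (List.cons (p-1)) else ∅)
      ∪ (Finset.Icc p s).biUnion (fun m => (LSf p (s+k) (s - m) k).image (List.cons m)) := by
    rw [show LS p s k = LSf p (s + k + 1) s k from rfl, LSf]
  rw [hunfold]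
  -- disjointness
  have hAB : Disjoint ((if s = 0 ∧ k = 0 then {([] : List ℕ)} else ∅))
      ((if 1 ≤ k ∧ p - 1 ≤ s then (LSf p (s+k) (s - (p-1)) (k-1)).image (List.cons (p-1)) else ∅)) := by
    rw [Finset.disjoint_left]
    intro l hl hl'
    split_ifs at hl hl'
    · obtain ⟨t, -, ht⟩ := Finset.mem_image.1 hl'
      rw [Finset.mem_singleton.1 hl] at ht
      exact absurd ht (by simp)
    · exact absurd hl' (Finset.notMem_empty _)
    · exact absurd hl (Finset.notMem_empty _)
    · exact absurd hl (Finset.notMem_empty _)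
  have hABC : Disjoint ((if s = 0 ∧ k = 0 then {([] : List ℕ)} else ∅)
      ∪ (if 1 ≤ k ∧ p - 1 ≤ s then (LSf p (s+k) (s - (p-1)) (k-1)).image (List.cons (p-1)) else ∅))
      ((Finset.Icc p s).biUnion (fun m => (LSf p (s+k) (s - m) k).image (List.cons m))) := by
    rw [Finset.disjoint_left]
    intro l hl hl'
    obtain ⟨m, hmIcc, hm⟩ := Finset.mem_biUnion.1 hl'
    obtain ⟨t, -, ht⟩ := Finset.mem_image.1 hm
    have hpm := (Finset.mem_Icc.1 hmIcc).1
    rcases Finset.mem_union.1 hl with hl | hl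
    · split_ifs at hl with h1
      · rw [Finset.mem_singleton.1 hl] at ht; exact absurd ht (by simp)
      · exact absurd hl (Finset.notMem_empty _)
    · split_ifs at hl with h1
      · obtain ⟨t', -, ht'⟩ := Finset.mem_image.1 hl
        rw [← ht'] at ht
        injection ht with h h'
        omega
      · exact absurd hl (Finset.notMem_empty _)
  rw [Finset.card_union_of_disjoint hABC, Finset.card_union_of_disjoint hAB]
  congr 1
  · congr 1
    · split_ifs with h1
      · exact Finset.card_singleton _
      · exact Finset.card_empty
    · split_ifs with h1
      · rw [Finset.card_image_of_injective _ (cons_inj _),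
          LSf_eq_LS p hp _ _ _ (by omega)]
      · exact Finset.card_empty
  · rw [Finset.card_biUnion]
    · refine Finset.sum_congr rfl fun m hm => ?_
      have hpm := (Finset.mem_Icc.1 hm).1
      have hms := (Finset.mem_Icc.1 hm).2
      rw [Finset.card_image_of_injective _ (cons_inj _),
        LSf_eq_LS p hp _ _ _ (by omega)]
    · intro x hx y hy hxy
      simp only [Function.onFun]
      rw [Finset.disjoint_left]
      intro l hl hl'
      obtain ⟨t, -, ht⟩ := Finset.mem_image.1 hl
      obtain ⟨t', -, ht'⟩ := Finset.mem_image.1 hl'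
      rw [← ht'] at ht
      injection ht with h h'
      exact hxy h

private lemma count_mul_le_sum (c : ℕ) : ∀ l : List ℕ, l.count c * c ≤ l.sum := by
  intro l
  induction l with
  | nil => simp
  | cons x t ih =>
    rw [List.sum_cons]
    have h2 : (t.count c + 1) * c = t.count c * c + c := by ring
    by_cases hx : x = c
    · subst hx; rw [List.count_cons_self]; omega
    · rw [List.count_cons_of_ne hx]; omega

lemma LS_card_zero (p : ℕ) (hp : 0 < p) (s k : ℕ) (h : s < k * (p-1)) :
    (LS p s k).card = 0 := by
  rw [Finset.card_eq_zero, Finset.eq_empty_iff_forall_notMem]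
  intro l hl
  obtain ⟨hsum, hcnt, -⟩ := (mem_LS p hp s k l).1 hl
  have := count_mul_le_sum (p-1) l
  rw [hcnt, hsum] at this
  omega

/-- The composition count in the `(n, k)` parametrisation. -/
def cnt (p n k : ℕ) : ℕ := (LS p (n + k * p - 2 * k) k).card

lemma cnt_rec (p : ℕ) (hp : 0 < p) (n k : ℕ) (hn : 1 ≤ n) (hk : k ≤ n) :
    cnt p n k = (if 1 ≤ k then cnt p (n-1) (k-1) else 0)
      + ∑ m ∈ Finset.Icc p (n - k), cnt p (n - m) k := by
  have hk0 : k = 0 → k * p = 0 := by intro h; simp [h]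
  have hkp : k ≤ k * p := Nat.le_mul_of_pos_right k hp
  have hk1p : (k-1) ≤ (k-1) * p := Nat.le_mul_of_pos_right _ hp
  have h1 : 1 ≤ k → k * p = (k-1) * p + p := by
    intro h
    rcases k with _ | j
    · omega
    · rw [show j + 1 - 1 = j from rfl, Nat.succ_mul]
  have hkp1 : k * (p-1) + k = k * p := by
    rcases p with _ | q
    · omega
    · rw [show q + 1 - 1 = q from rfl, Nat.mul_succ]
  set s := n + k * p - 2 * k with hs
  rw [cnt, LS_card_rec p hp s k]
  have hA : ¬ (s = 0 ∧ k = 0) := by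
    rintro ⟨h0, rfl⟩; simp only [Nat.mul_zero, hk0] at h0 hs; omega
  rw [if_neg hA]
  congr 1
  · rw [Nat.zero_add]
    by_cases h1k : 1 ≤ k
    · rw [if_pos ⟨h1k, by omega⟩, if_pos h1k, cnt]
      congr 2
      have := h1 h1k
      omega
    · rw [if_neg (by omega), if_neg h1k]
  · have hsub : Finset.Icc p (n - k) ⊆ Finset.Icc p s := by
      apply Finset.Icc_subset_Icc_right; omega
    rw [← Finset.sum_subset hsub]
    · refine Finset.sum_congr rfl fun m hm => ?_
      obtain ⟨hpm, hms⟩ := Finset.mem_Icc.1 hm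
      rw [cnt]
      congr 2
      omega
    · intro m hm hnm
      obtain ⟨hpm, hms⟩ := Finset.mem_Icc.1 hm
      rw [Finset.mem_Icc, not_and] at hnm
      have hmn : n - k < m := by omega
      apply LS_card_zero p hp
      omega

lemma coeff_F_eq_zero (p j k : ℕ) (h : j < k) : (F j p).charpoly.coeff k = 0 := by
  apply Polynomial.coeff_eq_zero_of_natDegree_lt
  rw [Matrix.charpoly_natDegree_eq_dim]
  simpa using h

lemma cnt_base (p : ℕ) (hp : 0 < p) : cnt p 0 0 = 1 := by
  rw [cnt, show 0 + 0 * p - 2 * 0 = 0 by simp, LS_card_rec p hp, if_pos ⟨rfl, rfl⟩,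
    if_neg (by omega), Finset.Icc_eq_empty (by omega), Finset.sum_empty]
  omega

lemma main_coeff (p : ℕ) (hp : 0 < p) :
    ∀ n k, k ≤ n → (F n p).charpoly.coeff k = (-1 : ℤ)^(n - k) * (cnt p n k : ℤ) := by
  intro n
  induction n using Nat.strong_induction_on with
  | _ n ih =>
    match n with
    | 0 =>
      intro k hk
      have hk0 : k = 0 := Nat.le_zero.1 hk
      subst hk0
      rw [charpoly_F_zero, cnt_base p hp]
      simp
    | (n+1) =>
      intro k hk
      have hcoeffC : ∀ (e : ℕ) (q : ℤ[X]) (k : ℕ),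
          ((-1 : ℤ[X])^e * q).coeff k = (-1:ℤ)^e * q.coeff k := by
        intro e q k
        rw [show ((-1 : ℤ[X])^e) = C ((-1 : ℤ)^e) by simp, Polynomial.coeff_C_mul]
      rw [charpoly_rec p hp n, Polynomial.coeff_add, Polynomial.finset_sum_coeff]
      have hsum : (∑ j ∈ Finset.range (n + 2 - p), ((-1 : ℤ[X])^(n+1+j) * (F j p).charpoly).coeff k)
          = (-1:ℤ)^(n+1-k) * ∑ m ∈ Finset.Icc p (n+1-k), (cnt p (n+1-m) k : ℤ) := by
        rw [← Finset.sum_filter_add_sum_filter_not (Finset.range (n+2-p)) (fun j => k ≤ j)]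
        have h2 : ∑ j ∈ (Finset.range (n+2-p)).filter (fun j => ¬ k ≤ j),
            ((-1 : ℤ[X])^(n+1+j) * (F j p).charpoly).coeff k = 0 := by
          apply Finset.sum_eq_zero
          intro j hj
          simp only [Finset.mem_filter, Finset.mem_range] at hj
          rw [hcoeffC, coeff_F_eq_zero p j k (by omega), mul_zero]
        rw [h2, add_zero, Finset.mul_sum]
        refine Finset.sum_nbij' (fun j => n+1-j) (fun m => n+1-m) ?_ ?_ ?_ ?_ ?_
        · intro j hj
          simp only [Finset.mem_filter, Finset.mem_range] at hj
          rw [Finset.mem_Icc]; omega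
        · intro m hm
          rw [Finset.mem_Icc] at hm
          simp only [Finset.mem_filter, Finset.mem_range]; omega
        · intro j hj
          simp only [Finset.mem_filter, Finset.mem_range] at hj; omega
        · intro m hm
          rw [Finset.mem_Icc] at hm; omega
        · intro j hj
          simp only [Finset.mem_filter, Finset.mem_range] at hj
          rw [hcoeffC, ih j (by omega) k (by omega), show n+1-(n+1-j) = j by omega,
            ← mul_assoc, ← pow_add, show (n+1+j) + (j-k) = (n+1-k) + 2*j by omega,
            pow_add, pow_mul]
          norm_num
      rw [hsum]
      rcases k with _ | k'
      · rw [Polynomial.mul_coeff_zero, Polynomial.coeff_X_zero, zero_mul, zero_add,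
          cnt_rec p hp (n+1) 0 (by omega) (by omega), if_neg (by omega)]
        push_cast
        ring
      · rw [Polynomial.coeff_X_mul, ih n (by omega) k' (by omega),
          cnt_rec p hp (n+1) (k'+1) (by omega) hk, if_pos (by omega),
          show n - k' = n+1-(k'+1) by omega, show (k'+1) - 1 = k' by omega,
          show (n+1) - 1 = n by omega]
        push_cast
        ring


/-- Writing the characteristic polynomial `det(xI - F_{n,p})` as
`∑ₖ (-1)^(n-k) a_{n-k} x^k`, the coefficient `a_{n-k}` equals the number of
compositions of `n + kp - 2k` with exactly `k` parts equal to `p - 1` and all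
other parts `≥ p`. -/
theorem stmt17 (n p k : ℕ) (hn : 0 < n) (hp : 0 < p) (hk : k ≤ n) :
    (F n p).charpoly.coeff k =
      (-1 : ℤ) ^ (n - k) *
        (Nat.card {l : List ℕ // l.sum = n + k * p - 2 * k ∧
            l.count (p - 1) = k ∧ ∀ x ∈ l, x = p - 1 ∨ p ≤ x} : ℤ) := by
  rw [main_coeff p hp n k hk]
  congr 2
  rw [cnt, ← Nat.card_eq_finsetCard]
  apply Nat.card_congr
  apply Equiv.subtypeEquivRight
  intro l
  rw [mem_LS p hp]
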